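/- For every k ≥ 1, every t > 0, x ∈ ℝ, and every constant C > 0, ∫_{Δₖ(t)×ℝᵏ} ∏_{l=1}^{k+1} (t_l - t_{l-1})^{-1} · exp(-(x_l - x_{l-1})²/(C(t_l - t_{l-1}))) dt dx ≤ (πC)^{k/2} · t^{-1/2} · e^{-x²/(Ct)} · ∫_{Δₖ(t)} ∏_{l=1}^{k+1} (t_l - t_{l-1})^{-1/2} dt, where t₀ = 0, x₀ = 0, t_{k+1} = t, x_{k+1} = x. -/

import Mathlib

open MeasureTheory

/-- The `k`-dimensional time simplex `{0 < t₁ < ⋯ < tₖ < t}`. -/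
def timeSimplex (k : ℕ) (t : ℝ) : Set (Fin k → ℝ) :=
  {τ | StrictMono τ ∧ ∀ i, τ i ∈ Set.Ioo 0 t}

/-- The sequence `0, τ₁, …, τₖ, t`. -/
noncomputable def extSeq (k : ℕ) (t : ℝ) (τ : Fin k → ℝ) : Fin (k + 2) → ℝ :=
  Fin.cons (0 : ℝ) (Fin.snoc τ t)

/-- `∏_{l=1}^{k+1} (t_l - t_{l-1})^{-1/2}` with `t₀ = 0` and `t_{k+1} = t`. -/
noncomputable def dirichletIntegrand (k : ℕ) (t : ℝ) (τ : Fin k → ℝ) : ℝ :=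
  ∏ l : Fin (k + 1),
    (extSeq k t τ l.succ - extSeq k t τ l.castSucc) ^ (-(1 / 2) : ℝ)

/-- `∏_{l=1}^{k+1} (t_l - t_{l-1})⁻¹ · exp(-(x_l - x_{l-1})²/(C(t_l - t_{l-1})))`
with `t₀ = 0, x₀ = 0, t_{k+1} = t, x_{k+1} = x`. -/
noncomputable def spaceTimeIntegrand (k : ℕ) (t x C : ℝ)
    (p : (Fin k → ℝ) × (Fin k → ℝ)) : ℝ :=
  ∏ l : Fin (k + 1),
    (extSeq k t p.1 l.succ - extSeq k t p.1 l.castSucc)⁻¹ *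
      Real.exp (-(extSeq k x p.2 l.succ - extSeq k x p.2 l.castSucc) ^ 2 /
        (C * (extSeq k t p.1 l.succ - extSeq k t p.1 l.castSucc)))

open Real ENNReal


section Aux

lemma exp_quad (a b z y : ℝ) (ha : a ≠ 0) (hb : b ≠ 0) (hab : a + b ≠ 0) :
    -y^2/a + -(z-y)^2/b = -(((a+b)/(a*b)) * (y - a*z/(a+b))^2) + -(z^2/(a+b)) := by
  field_simp
  ring

lemma gauss_conv_integrable {a b : ℝ} (ha : 0 < a) (hb : 0 < b) (z : ℝ) :
    Integrable fun y : ℝ => Real.exp (-y^2/a) * Real.exp (-(z-y)^2/b) := by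
  have hab : 0 < a + b := by linarith
  have h : ∀ y : ℝ, Real.exp (-y^2/a) * Real.exp (-(z-y)^2/b)
      = Real.exp (-(((a+b)/(a*b)) * (y - a*z/(a+b))^2)) * Real.exp (-(z^2/(a+b))) := by
    intro y
    rw [← Real.exp_add, ← Real.exp_add, exp_quad a b z y ha.ne' hb.ne' hab.ne']
  simp_rw [h]
  have hc : 0 < (a+b)/(a*b) := by positivity
  have : Integrable fun y : ℝ => Real.exp (-(((a+b)/(a*b)) * y^2)) := by
    simpa using integrable_exp_neg_mul_sq hc
  exact (this.comp_sub_right (a*z/(a+b))).mul_const _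

lemma gauss_conv {a b : ℝ} (ha : 0 < a) (hb : 0 < b) (z : ℝ) :
    ∫ y : ℝ, Real.exp (-y^2/a) * Real.exp (-(z-y)^2/b)
      = Real.sqrt (π * a * b / (a+b)) * Real.exp (-z^2/(a+b)) := by
  have hab : 0 < a + b := by linarith
  have h : ∀ y : ℝ, Real.exp (-y^2/a) * Real.exp (-(z-y)^2/b)
      = Real.exp (-(((a+b)/(a*b)) * (y - a*z/(a+b))^2)) * Real.exp (-(z^2/(a+b))) := by
    intro y
    rw [← Real.exp_add, ← Real.exp_add, exp_quad a b z y ha.ne' hb.ne' hab.ne']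
  simp_rw [h]
  rw [integral_mul_const]
  rw [integral_sub_right_eq_self (fun y => Real.exp (-(((a+b)/(a*b)) * y^2))) (a*z/(a+b))]
  simp_rw [← neg_mul]
  rw [integral_gaussian]
  congr 2
  · rw [div_div_eq_mul_div]
    field_simp
  · rw [neg_div]

lemma gauss_conv_lintegral {a b : ℝ} (ha : 0 < a) (hb : 0 < b) (z : ℝ) :
    ∫⁻ y : ℝ, ENNReal.ofReal (Real.exp (-y^2/a) * Real.exp (-(z-y)^2/b))
      = ENNReal.ofReal (Real.sqrt (π * a * b / (a+b)) * Real.exp (-z^2/(a+b))) := by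
  rw [← gauss_conv ha hb z]
  exact (ofReal_integral_eq_lintegral_ofReal (gauss_conv_integrable ha hb z)
    (Filter.Eventually.of_forall fun y => by positivity)).symm

lemma measurable_extSeq (k : ℕ) (t : ℝ) (j : Fin (k+2)) :
    Measurable fun τ : Fin k → ℝ => extSeq k t τ j := by
  unfold extSeq
  induction j using Fin.cases with
  | zero => simp only [Fin.cons_zero]; exact measurable_const
  | succ i =>
    simp only [Fin.cons_succ]
    induction i using Fin.lastCases with
    | last => simp only [Fin.snoc_last]; exact measurable_const
    | cast m => simp only [Fin.snoc_castSucc]; exact measurable_pi_apply m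

lemma measurable_G (n : ℕ) (x : ℝ) (c : Fin (n+1) → ℝ) :
    Measurable fun σ : Fin n → ℝ =>
      ∏ l : Fin (n+1), Real.exp (-(extSeq n x σ l.succ - extSeq n x σ l.castSucc)^2 / c l) := by
  apply Finset.measurable_prod
  intro l _
  have h1 := measurable_extSeq n x l.succ
  have h2 := measurable_extSeq n x l.castSucc
  fun_prop

lemma measurable_cons (n : ℕ) :
    Measurable fun p : ℝ × (Fin n → ℝ) => (Fin.cons p.1 p.2 : Fin (n+1) → ℝ) := by
  rw [measurable_pi_iff]
  intro j
  induction j using Fin.cases with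
  | zero => simp only [Fin.cons_zero]; exact measurable_fst
  | succ i => simp only [Fin.cons_succ]; exact (measurable_pi_apply i).comp measurable_snd

lemma prod_split (n : ℕ) (c : Fin (n+2) → ℝ) (x y : ℝ) (σ' : Fin n → ℝ) :
    (∏ l : Fin (n+2), Real.exp (-(extSeq (n+1) x (Fin.cons y σ') l.succ -
        extSeq (n+1) x (Fin.cons y σ') l.castSucc)^2 / c l))
    = (Real.exp (-y^2 / c 0) * Real.exp (-((Fin.snoc σ' x : Fin (n+1) → ℝ) 0 - y)^2 / c 1)) *
       ∏ m : Fin n, Real.exp (-((Fin.snoc σ' x : Fin (n+1) → ℝ) m.succ -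
          (Fin.snoc σ' x : Fin (n+1) → ℝ) m.castSucc)^2 / c m.succ.succ) := by
  have hE : extSeq (n+1) x (Fin.cons y σ') =
      Fin.cons 0 (Fin.cons y (Fin.snoc σ' x)) := by
    unfold extSeq
    rw [← Fin.cons_snoc_eq_snoc_cons]
  rw [hE, Fin.prod_univ_succ, Fin.prod_univ_succ]
  simp only [← Fin.succ_castSucc, Fin.cons_succ, Fin.cons_zero, Fin.castSucc_zero, sub_zero]
  simp only [Fin.succ_zero_eq_one]
  ring

lemma prod_merge (n : ℕ) (c : Fin (n+2) → ℝ) (x : ℝ) (σ' : Fin n → ℝ) :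
    Real.exp (-((Fin.snoc σ' x : Fin (n+1) → ℝ) 0)^2 / (c 0 + c 1)) *
      ∏ m : Fin n, Real.exp (-((Fin.snoc σ' x : Fin (n+1) → ℝ) m.succ -
        (Fin.snoc σ' x : Fin (n+1) → ℝ) m.castSucc)^2 / c m.succ.succ)
    = ∏ l : Fin (n+1), Real.exp (-(extSeq n x σ' l.succ - extSeq n x σ' l.castSucc)^2 /
        (Fin.cons (c 0 + c 1) (fun m => c m.succ.succ) : Fin (n+1) → ℝ) l) := by
  rw [Fin.prod_univ_succ]
  unfold extSeq
  simp only [← Fin.succ_castSucc, Fin.cons_succ, Fin.cons_zero, Fin.castSucc_zero, sub_zero]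

end Aux

lemma gaussProd : ∀ (n : ℕ) (c : Fin (n+1) → ℝ), (∀ i, 0 < c i) → ∀ x : ℝ,
    ∫⁻ σ : Fin n → ℝ, ENNReal.ofReal
        (∏ l : Fin (n+1), Real.exp (-(extSeq n x σ l.succ - extSeq n x σ l.castSucc)^2 / c l))
      = ENNReal.ofReal ((∏ l : Fin (n+1), Real.sqrt (π * c l)) / Real.sqrt (π * ∑ l, c l)
          * Real.exp (-x^2 / ∑ l, c l)) := by
  intro n
  induction n with
  | zero =>
    intro c hc x
    have h1 : 0 < π * c 0 := by have := hc 0; positivity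
    simp only [Fin.prod_univ_succ, Fin.prod_univ_zero, Fin.sum_univ_succ,
      Fin.sum_univ_zero, mul_one, add_zero]
    have h0 : ∀ σ : Fin 0 → ℝ, extSeq 0 x σ 1 = x := fun σ => rfl
    have heq : ∀ σ : Fin 0 → ℝ,
        extSeq 0 x σ (0 : Fin 1).succ - extSeq 0 x σ (0:Fin 1).castSucc = x := by
      intro σ
      rw [show (0:Fin 1).succ = 1 from rfl, h0]
      simp [extSeq]
    simp only [heq]
    rw [lintegral_const]
    have hvol : (volume : Measure (Fin 0 → ℝ)) Set.univ = 1 := by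
      rw [MeasureTheory.volume_pi, Measure.pi_univ]
      simp
    rw [hvol, mul_one]
    congr 1
    rw [div_self (Real.sqrt_ne_zero'.mpr h1)]
    ring
  | succ n IH =>
    intro c hc x
    have hc0 := hc 0
    have hc1 := hc 1
    have hc01 : 0 < c 0 + c 1 := by linarith
    -- the new increment sequence
    set c' : Fin (n+1) → ℝ := Fin.cons (c 0 + c 1) (fun m => c m.succ.succ) with hc'def
    have hc' : ∀ i, 0 < c' i := by
      intro i
      induction i using Fin.cases with
      | zero => simpa [hc'def] using hc01
      | succ m => simpa [hc'def] using hc m.succ.succ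
    set F : (Fin (n+1) → ℝ) → ℝ≥0∞ := fun σ => ENNReal.ofReal
        (∏ l : Fin (n+2), Real.exp (-(extSeq (n+1) x σ l.succ -
          extSeq (n+1) x σ l.castSucc)^2 / c l)) with hFdef
    have hFmeas : Measurable F := (measurable_G (n+1) x c).ennreal_ofReal
    -- step 1: peel off the first coordinate
    have key := MeasureTheory.volume_preserving_piFinSuccAbove (fun _ : Fin (n+1) => ℝ) 0
    set e := MeasurableEquiv.piFinSuccAbove (fun _ : Fin (n+1) => ℝ) 0 with he
    have hsymm : ∀ p : ℝ × (Fin n → ℝ), e.symm p = Fin.cons p.1 p.2 := by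
      intro p
      show (Fin.insertNthEquiv (fun _ : Fin (n+1) => ℝ) 0) p = _
      simp [Fin.insertNthEquiv]
    have step1 : ∫⁻ σ : Fin (n+1) → ℝ, F σ
        = ∫⁻ p : ℝ × (Fin n → ℝ), F (Fin.cons p.1 p.2) := by
      simp_rw [← hsymm]
      rw [← key.lintegral_comp_emb e.measurableEmbedding (fun p => F (e.symm p))]
      simp
    have hmeas2 : Measurable fun p : ℝ × (Fin n → ℝ) => F (Fin.cons p.1 p.2) :=
      hFmeas.comp (measurable_cons n)
    have step2 : ∫⁻ p : ℝ × (Fin n → ℝ), F (Fin.cons p.1 p.2)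
        = ∫⁻ σ' : Fin n → ℝ, ∫⁻ y : ℝ, F (Fin.cons y σ') := by
      rw [Measure.volume_eq_prod, lintegral_prod _ hmeas2.aemeasurable]
      exact lintegral_lintegral_swap hmeas2.aemeasurable
    -- inner integral
    have inner_eq : ∀ σ' : Fin n → ℝ, ∫⁻ y : ℝ, F (Fin.cons y σ')
        = ENNReal.ofReal (Real.sqrt (π * c 0 * c 1 / (c 0 + c 1))) *
          ENNReal.ofReal (∏ l : Fin (n+1),
            Real.exp (-(extSeq n x σ' l.succ - extSeq n x σ' l.castSucc)^2 / c' l)) := by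
      intro σ'
      set w : Fin (n+1) → ℝ := (Fin.snoc σ' x : Fin (n+1) → ℝ) with hw
      set T : ℝ := ∏ m : Fin n, Real.exp (-(w m.succ - w m.castSucc)^2 / c m.succ.succ) with hT
      have hT0 : 0 ≤ T := by positivity
      have h1 : ∀ y : ℝ, F (Fin.cons y σ')
          = ENNReal.ofReal (Real.exp (-y^2 / c 0) * Real.exp (-(w 0 - y)^2 / c 1)) *
            ENNReal.ofReal T := by
        intro y
        rw [hFdef]
        simp only
        rw [prod_split n c x y σ']
        rw [ENNReal.ofReal_mul (by positivity)]
      simp_rw [h1]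
      rw [lintegral_mul_const' _ _ ENNReal.ofReal_ne_top]
      rw [gauss_conv_lintegral hc0 hc1 (w 0)]
      rw [← ENNReal.ofReal_mul (by positivity), mul_assoc,
        ENNReal.ofReal_mul (Real.sqrt_nonneg _), ENNReal.ofReal_mul (by positivity),
        ← ENNReal.ofReal_mul (by positivity)]
      congr 2
      exact prod_merge n c x σ'
    simp_rw [step1, step2, inner_eq]
    rw [lintegral_const_mul' _ _ ENNReal.ofReal_ne_top]
    rw [IH c' hc' x]
    -- final scalar algebra
    have hS : (∑ l : Fin (n+1), c' l) = ∑ l : Fin (n+2), c l := by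
      rw [Fin.sum_univ_succ, Fin.sum_univ_succ,
        Fin.sum_univ_succ (f := fun l : Fin (n+1) => c l.succ)]
      simp only [hc'def, Fin.cons_zero, Fin.cons_succ, Fin.succ_zero_eq_one]
      ring
    have hP : Real.sqrt (π * c 0 * c 1 / (c 0 + c 1)) * ∏ l : Fin (n+1), Real.sqrt (π * c' l)
        = ∏ l : Fin (n+2), Real.sqrt (π * c l) := by
      rw [Fin.prod_univ_succ, Fin.prod_univ_succ,
        Fin.prod_univ_succ (f := fun l : Fin (n+1) => Real.sqrt (π * c l.succ))]
      simp only [hc'def, Fin.cons_zero, Fin.cons_succ, Fin.succ_zero_eq_one]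
      rw [← mul_assoc, ← mul_assoc]
      congr 1
      rw [← Real.sqrt_mul (by positivity), ← Real.sqrt_mul (by positivity)]
      congr 1
      field_simp
    rw [← ENNReal.ofReal_mul (Real.sqrt_nonneg _)]
    congr 1
    rw [hS, ← hP]
    ring


lemma sum_incr (k : ℕ) (t : ℝ) (τ : Fin k → ℝ) :
    ∑ l : Fin (k+1), (extSeq k t τ l.succ - extSeq k t τ l.castSucc) = t := by
  set g : ℕ → ℝ := fun i => extSeq k t τ ⟨min i (k+1), by omega⟩ with hg
  have hstep : ∀ l : Fin (k+1),
      extSeq k t τ l.succ - extSeq k t τ l.castSucc = g (↑l+1) - g ↑l := by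
    intro l
    have hlt := l.isLt
    have h1 : l.succ = (⟨min (↑l+1) (k+1), by omega⟩ : Fin (k+2)) := by
      ext; simp only [Fin.val_succ]; omega
    have h2 : l.castSucc = (⟨min (↑l : ℕ) (k+1), by omega⟩ : Fin (k+2)) := by
      ext; simp only [Fin.coe_castSucc]; omega
    rw [h1, h2]
  calc ∑ l : Fin (k+1), (extSeq k t τ l.succ - extSeq k t τ l.castSucc)
      = ∑ l : Fin (k+1), (g (↑l+1) - g ↑l) := by
        exact Finset.sum_congr rfl fun l _ => hstep l
    _ = ∑ i ∈ Finset.range (k+1), (g (i+1) - g i) :=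
        Fin.sum_univ_eq_sum_range (fun i => g (i+1) - g i) (k+1)
    _ = g (k+1) - g 0 := Finset.sum_range_sub g (k+1)
    _ = t := by
        have hlast : g (k+1) = t := by
          have : (⟨min (k+1) (k+1), by omega⟩ : Fin (k+2)) = Fin.last (k+1) := by
            ext; simp
          rw [hg]
          simp only
          rw [this]
          unfold extSeq
          rw [← Fin.succ_last, Fin.cons_succ, Fin.snoc_last]
        have h0 : g 0 = 0 := by
          have : (⟨min 0 (k+1), by omega⟩ : Fin (k+2)) = 0 := by ext; simp
          rw [hg]
          simp only
          rw [this]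
          unfold extSeq
          rw [Fin.cons_zero]
        rw [hlast, h0, sub_zero]

lemma incr_pos {k : ℕ} {t : ℝ} (ht : 0 < t) {τ : Fin k → ℝ}
    (hτ : τ ∈ timeSimplex k t) (l : Fin (k+1)) :
    0 < extSeq k t τ l.succ - extSeq k t τ l.castSucc := by
  obtain ⟨hm, hio⟩ := hτ
  have h1 : ∀ j : Fin (k+1), 0 < (Fin.snoc τ t : Fin (k+1) → ℝ) j := by
    intro j
    induction j using Fin.lastCases with
    | last => rw [Fin.snoc_last]; exact ht
    | cast m => rw [Fin.snoc_castSucc]; exact (hio m).1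
  have h2 : ∀ m : Fin k, (Fin.snoc τ t : Fin (k+1) → ℝ) m.castSucc <
      (Fin.snoc τ t : Fin (k+1) → ℝ) m.succ := by
    intro m
    rw [Fin.snoc_castSucc]
    rcases Fin.eq_castSucc_or_eq_last m.succ with ⟨m', hm'⟩ | hm'
    · rw [hm', Fin.snoc_castSucc]
      apply hm
      have hval : (m' : ℕ) = (m : ℕ) + 1 := by
        have := congrArg Fin.val hm'
        simpa using this.symm
      rw [Fin.lt_def]
      omega
    · rw [hm', Fin.snoc_last]
      exact (hio m).2
  induction l using Fin.cases with
  | zero =>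
    have e1 : extSeq k t τ (0 : Fin (k+1)).succ = (Fin.snoc τ t : Fin (k+1) → ℝ) 0 := by
      unfold extSeq; rw [Fin.cons_succ]
    have e2 : extSeq k t τ (0 : Fin (k+1)).castSucc = 0 := by
      unfold extSeq; rw [Fin.castSucc_zero, Fin.cons_zero]
    rw [e1, e2, sub_zero]
    exact h1 0
  | succ m =>
    have e1 : extSeq k t τ (m.succ).succ = (Fin.snoc τ t : Fin (k+1) → ℝ) m.succ := by
      unfold extSeq; rw [Fin.cons_succ]
    have e2 : extSeq k t τ (m.succ).castSucc = (Fin.snoc τ t : Fin (k+1) → ℝ) m.castSucc := by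
      unfold extSeq; rw [← Fin.succ_castSucc, Fin.cons_succ]
    rw [e1, e2]
    exact sub_pos.mpr (h2 m)

lemma measurableSet_timeSimplex (k : ℕ) (t : ℝ) : MeasurableSet (timeSimplex k t) := by
  have heq : timeSimplex k t =
      (⋂ (i : Fin k) (j : Fin k) (_ : i < j), {τ : Fin k → ℝ | τ i < τ j}) ∩
        ⋂ (i : Fin k), {τ : Fin k → ℝ | τ i ∈ Set.Ioo 0 t} := by
    ext τ
    simp only [timeSimplex, Set.mem_setOf_eq, Set.mem_inter_iff, Set.mem_iInter]
    constructor
    · rintro ⟨hm, hio⟩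
      exact ⟨fun i j hij => hm hij, hio⟩
    · rintro ⟨hm, hio⟩
      exact ⟨fun i j hij => hm i j hij, hio⟩
  rw [heq]
  refine MeasurableSet.inter ?_ ?_
  · exact MeasurableSet.iInter fun i => MeasurableSet.iInter fun j =>
      MeasurableSet.iInter fun _ =>
        measurableSet_lt (measurable_pi_apply i) (measurable_pi_apply j)
  · exact MeasurableSet.iInter fun i =>
      (measurable_pi_apply i) measurableSet_Ioo

lemma const_algebra (k : ℕ) (t x C : ℝ) (ht : 0 < t) (hC : 0 < C) (d : Fin (k+1) → ℝ)
    (hd : ∀ l, 0 < d l) :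
    (∏ l, (d l)⁻¹) * ((∏ l, Real.sqrt (π * (C * d l))) / Real.sqrt (π * (C * t))
        * Real.exp (-x^2 / (C * t)))
    = (π * C) ^ ((k:ℝ)/2) * t ^ (-(1/2):ℝ) * Real.exp (-x^2/(C*t)) *
        ∏ l, (d l) ^ (-(1/2):ℝ) := by
  have hπC : 0 < π * C := by positivity
  have h1 : ∀ l : Fin (k+1), (d l)⁻¹ * Real.sqrt (π * (C * d l))
      = Real.sqrt (π*C) * (d l) ^ (-(1/2):ℝ) := by
    intro l
    rw [show π * (C * d l) = (π*C) * d l by ring, Real.sqrt_mul hπC.le,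
      Real.sqrt_eq_rpow (d l)]
    rw [show (d l)⁻¹ = (d l) ^ (-1:ℝ) from (Real.rpow_neg_one (d l)).symm]
    rw [← mul_assoc, mul_comm ((d l) ^ (-1:ℝ)), mul_assoc, ← Real.rpow_add (hd l)]
    norm_num
  have hprod : (∏ l, (d l)⁻¹) * (∏ l, Real.sqrt (π * (C * d l)))
      = Real.sqrt (π*C) ^ (k+1) * ∏ l, (d l) ^ (-(1/2):ℝ) := by
    rw [← Finset.prod_mul_distrib]
    simp_rw [h1]
    rw [Finset.prod_mul_distrib, Finset.prod_const, Finset.card_univ, Fintype.card_fin]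
  have hsq : Real.sqrt (π * (C * t)) = Real.sqrt (π*C) * Real.sqrt t := by
    rw [show π * (C * t) = (π*C) * t by ring, Real.sqrt_mul hπC.le]
  have key2 : Real.sqrt (π*C) ^ (k+1) / (Real.sqrt (π*C) * Real.sqrt t)
      = (π*C) ^ ((k:ℝ)/2) * t ^ (-(1/2):ℝ) := by
    rw [Real.sqrt_eq_rpow (π*C), Real.sqrt_eq_rpow t,
      ← Real.rpow_natCast ((π*C) ^ ((1:ℝ)/2)) (k+1), ← Real.rpow_mul hπC.le]
    rw [div_mul_eq_div_div, ← Real.rpow_sub hπC, Real.rpow_neg ht.le, div_eq_mul_inv]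
    congr 2
    push_cast
    ring
  calc (∏ l, (d l)⁻¹) * ((∏ l, Real.sqrt (π * (C * d l))) / Real.sqrt (π * (C * t))
        * Real.exp (-x^2 / (C * t)))
      = ((∏ l, (d l)⁻¹) * (∏ l, Real.sqrt (π * (C * d l)))) / Real.sqrt (π * (C * t))
        * Real.exp (-x^2 / (C * t)) := by ring
    _ = (Real.sqrt (π*C) ^ (k+1) / (Real.sqrt (π*C) * Real.sqrt t)) *
          (∏ l, (d l) ^ (-(1/2):ℝ)) * Real.exp (-x^2 / (C * t)) := by
        rw [hprod, hsq]; ring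
    _ = _ := by rw [key2]; ring

lemma measurable_spaceTimeIntegrand (k : ℕ) (t x C : ℝ) :
    Measurable (spaceTimeIntegrand k t x C) := by
  unfold spaceTimeIntegrand
  apply Finset.measurable_prod
  intro l _
  have h1 : Measurable fun p : (Fin k → ℝ) × (Fin k → ℝ) => extSeq k t p.1 l.succ :=
    (measurable_extSeq k t l.succ).comp measurable_fst
  have h2 : Measurable fun p : (Fin k → ℝ) × (Fin k → ℝ) => extSeq k t p.1 l.castSucc :=
    (measurable_extSeq k t l.castSucc).comp measurable_fst
  have h3 : Measurable fun p : (Fin k → ℝ) × (Fin k → ℝ) => extSeq k x p.2 l.succ :=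
    (measurable_extSeq k x l.succ).comp measurable_snd
  have h4 : Measurable fun p : (Fin k → ℝ) × (Fin k → ℝ) => extSeq k x p.2 l.castSucc :=
    (measurable_extSeq k x l.castSucc).comp measurable_snd
  fun_prop

lemma measurable_dirichletIntegrand (k : ℕ) (t : ℝ) :
    Measurable (dirichletIntegrand k t) := by
  unfold dirichletIntegrand
  apply Finset.measurable_prod
  intro l _
  have h1 := measurable_extSeq k t l.succ
  have h2 := measurable_extSeq k t l.castSucc
  fun_prop

theorem spaceTime_chaos_L2_bound (k : ℕ) (hk : 1 ≤ k) (t x C : ℝ)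
    (ht : 0 < t) (hC : 0 < C) :
    ∫ p in {p : (Fin k → ℝ) × (Fin k → ℝ) | p.1 ∈ timeSimplex k t},
        spaceTimeIntegrand k t x C p ≤
      (Real.pi * C) ^ ((k : ℝ) / 2) * t ^ (-(1 / 2) : ℝ) *
        Real.exp (-x ^ 2 / (C * t)) *
        ∫ τ in timeSimplex k t, dirichletIntegrand k t τ := by
  have hSm : MeasurableSet (timeSimplex k t) := measurableSet_timeSimplex k t
  have hset : {p : (Fin k → ℝ) × (Fin k → ℝ) | p.1 ∈ timeSimplex k t}
      = timeSimplex k t ×ˢ (Set.univ : Set (Fin k → ℝ)) := by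
    ext p; simp [Set.mem_prod]
  set K : ℝ := (π*C) ^ ((k:ℝ)/2) * t ^ (-(1/2):ℝ) * Real.exp (-x^2/(C*t)) with hK
  have hK0 : 0 ≤ K := by positivity
  have hfm := measurable_spaceTimeIntegrand k t x C
  have hdm := measurable_dirichletIntegrand k t
  -- nonnegativity on the simplex
  have hnonneg : ∀ p : (Fin k → ℝ) × (Fin k → ℝ), p.1 ∈ timeSimplex k t →
      0 ≤ spaceTimeIntegrand k t x C p := by
    intro p hp
    unfold spaceTimeIntegrand
    apply Finset.prod_nonneg
    intro l _
    have := incr_pos ht hp l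
    positivity
  have hdnonneg : ∀ τ ∈ timeSimplex k t, 0 ≤ dirichletIntegrand k t τ := by
    intro τ hτ
    unfold dirichletIntegrand
    apply Finset.prod_nonneg
    intro l _
    exact Real.rpow_nonneg (incr_pos ht hτ l).le _
  -- RHS integral as lintegral
  have hRHS : ∫ τ in timeSimplex k t, dirichletIntegrand k t τ
      = (∫⁻ τ in timeSimplex k t, ENNReal.ofReal (dirichletIntegrand k t τ)).toReal := by
    rw [integral_eq_lintegral_of_nonneg_ae
      ((ae_restrict_iff' hSm).mpr (ae_of_all _ hdnonneg))
      hdm.aestronglyMeasurable]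
  -- LHS integral as lintegral
  rw [hset]
  rw [integral_eq_lintegral_of_nonneg_ae
    ((ae_restrict_iff' (hSm.prod MeasurableSet.univ)).mpr
      (ae_of_all _ fun p hp => hnonneg p hp.1))
    hfm.aestronglyMeasurable]
  -- compute the lintegral
  have inner : ∀ τ ∈ timeSimplex k t,
      (fun τ => ∫⁻ σ : Fin k → ℝ, ENNReal.ofReal (spaceTimeIntegrand k t x C (τ, σ))) τ
      = (fun τ => ENNReal.ofReal (K * dirichletIntegrand k t τ)) τ := by
    intro τ hτ
    simp only
    have hd : ∀ l : Fin (k+1), 0 < extSeq k t τ l.succ - extSeq k t τ l.castSucc :=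
      fun l => incr_pos ht hτ l
    have hsplit : ∀ σ : Fin k → ℝ, spaceTimeIntegrand k t x C (τ, σ)
        = (∏ l : Fin (k+1), (extSeq k t τ l.succ - extSeq k t τ l.castSucc)⁻¹) *
          ∏ l : Fin (k+1), Real.exp (-(extSeq k x σ l.succ - extSeq k x σ l.castSucc)^2 /
            ((fun l : Fin (k+1) => C * (extSeq k t τ l.succ - extSeq k t τ l.castSucc)) l)) := by
      intro σ
      unfold spaceTimeIntegrand
      rw [← Finset.prod_mul_distrib]
    have hinv0 : 0 ≤ ∏ l : Fin (k+1), (extSeq k t τ l.succ - extSeq k t τ l.castSucc)⁻¹ :=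
      Finset.prod_nonneg fun l _ => (inv_nonneg.mpr (hd l).le)
    simp_rw [hsplit, ENNReal.ofReal_mul hinv0]
    rw [lintegral_const_mul' _ _ ENNReal.ofReal_ne_top]
    rw [gaussProd k _ (fun l => by have := hd l; positivity) x]
    rw [← ENNReal.ofReal_mul hinv0]
    congr 1
    have hsum : (∑ l : Fin (k+1), C * (extSeq k t τ l.succ - extSeq k t τ l.castSucc))
        = C * t := by
      rw [← Finset.mul_sum, sum_incr k t τ]
    rw [hsum]
    exact const_algebra k t x C ht hC _ hd
  have head : ∫⁻ p in timeSimplex k t ×ˢ (Set.univ : Set (Fin k → ℝ)),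
        ENNReal.ofReal (spaceTimeIntegrand k t x C p)
      = ENNReal.ofReal K *
        ∫⁻ τ in timeSimplex k t, ENNReal.ofReal (dirichletIntegrand k t τ) := by
    have hrestr : (volume : Measure ((Fin k → ℝ) × (Fin k → ℝ))).restrict
          (timeSimplex k t ×ˢ (Set.univ : Set (Fin k → ℝ)))
        = (volume.restrict (timeSimplex k t)).prod volume := by
      rw [Measure.volume_eq_prod, ← Measure.restrict_prod_eq_prod_univ]
    rw [hrestr, lintegral_prod _ (hfm.ennreal_ofReal.aemeasurable)]
    rw [setLIntegral_congr_fun hSm inner]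
    simp_rw [ENNReal.ofReal_mul hK0]
    rw [lintegral_const_mul' _ _ ENNReal.ofReal_ne_top]
  rw [head, hRHS, ENNReal.toReal_mul, ENNReal.toReal_ofReal hK0]
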